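/- Let A, B be positive definite matrices (or positive invertible operators on a Hilbert space) and λ a real number. Then for any invertible D, (D A D*)^λ = D A^{1/2} (A^{1/2} |D|² A^{1/2})^{λ−1} A^{1/2} D*, where |D|² = D*D and real powers are defined via functional calculus. -/

import Mathlib

open Matrix ComplexOrder

/-- Real power of a Hermitian matrix via the spectral theorem (functional calculus);
junk value `0` for non-Hermitian matrices. -/
noncomputable def Matrix.hrpow {n : ℕ} (A : Matrix (Fin n) (Fin n) ℂ) (r : ℝ) :
    Matrix (Fin n) (Fin n) ℂ :=
  if h : A.IsHermitian then
    (h.eigenvectorUnitary : Matrix (Fin n) (Fin n) ℂ) *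
      Matrix.diagonal (fun i => ((h.eigenvalues i ^ r : ℝ) : ℂ)) *
      (h.eigenvectorUnitary : Matrix (Fin n) (Fin n) ℂ)ᴴ
  else 0

/-- Weighted geometric mean `A #_ν B` of positive definite matrices:
`A^{1/2} (A^{-1/2} B A^{-1/2})^ν A^{1/2}`. -/
noncomputable def Matrix.gmean {n : ℕ} (A B : Matrix (Fin n) (Fin n) ℂ) (ν : ℝ) :
    Matrix (Fin n) (Fin n) ℂ :=
  A.hrpow (1/2) * ((A.hrpow (-(1/2)) * B * A.hrpow (-(1/2))).hrpow ν) * A.hrpow (1/2)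

/-- Quadratic weighted geometric mean `X ⓢ_ν Y = X* (|Y X⁻¹|²)^ν X`. -/
noncomputable def Matrix.qgmean {n : ℕ} (X Y : Matrix (Fin n) (Fin n) ℂ) (ν : ℝ) :
    Matrix (Fin n) (Fin n) ℂ :=
  Xᴴ * ((Y * X⁻¹)ᴴ * (Y * X⁻¹)).hrpow ν * X

namespace HrpowAux

open Topology

variable {n : ℕ} {A : Matrix (Fin n) (Fin n) ℂ}

theorem spec_eq_range (U : Matrix.unitaryGroup (Fin n) ℂ) (d : Fin n → ℝ)
    (hAd : A = (U : Matrix (Fin n) (Fin n) ℂ) * Matrix.diagonal (RCLike.ofReal ∘ d) *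
      star (U : Matrix (Fin n) (Fin n) ℂ)) :
    spectrum ℝ A = Set.range d := by
  ext x
  conv_lhs => rw [hAd, Unitary.spectrum_star_right_conjugate,
    ← spectrum.algebraMap_mem_iff ℂ, spectrum_diagonal, RCLike.algebraMap_eq_ofReal]
  simp

theorem isHermitian_of_conj (U : Matrix.unitaryGroup (Fin n) ℂ) (d : Fin n → ℝ)
    (hAd : A = (U : Matrix (Fin n) (Fin n) ℂ) * Matrix.diagonal (RCLike.ofReal ∘ d) *
      star (U : Matrix (Fin n) (Fin n) ℂ)) : A.IsHermitian := by
  subst hAd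
  rw [star_eq_conjTranspose]
  exact isHermitian_mul_mul_conjTranspose _
    (isHermitian_diagonal_of_self_adjoint _ (by ext i; simp))

/-- generalized `cfcAux` -/
@[simps]
noncomputable def auxHom (U : Matrix.unitaryGroup (Fin n) ℂ) (d : Fin n → ℝ)
    (hAd : A = (U : Matrix (Fin n) (Fin n) ℂ) * Matrix.diagonal (RCLike.ofReal ∘ d) *
      star (U : Matrix (Fin n) (Fin n) ℂ)) :
    C(spectrum ℝ A, ℝ) →⋆ₐ[ℝ] (Matrix (Fin n) (Fin n) ℂ) where
  toFun := fun g => (U : Matrix (Fin n) (Fin n) ℂ) *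
    diagonal (RCLike.ofReal ∘ g ∘ (fun i ↦ ⟨d i, (spec_eq_range U d hAd) ▸ Set.mem_range_self i⟩))
    * star (U : Matrix (Fin n) (Fin n) ℂ)
  map_one' := by simp [Pi.one_def (M := fun _ : Fin n ↦ ℂ)]
  map_mul' f g := by
    have {a b c d e f : Matrix (Fin n) (Fin n) ℂ} :
        (a * b * c) * (d * e * f) = a * (b * (c * d) * e) * f := by
      simp only [mul_assoc]
    simp only [this, ContinuousMap.coe_mul, SetLike.coe_mem, Unitary.star_mul_self_of_mem, mul_one,
      diagonal_mul_diagonal, Function.comp_apply]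
    congr! with i
    simp
  map_zero' := by simp [Pi.zero_def (M := fun _ : Fin n ↦ ℂ)]
  map_add' f g := by
    simp only [ContinuousMap.coe_add, ← add_mul, ← mul_add, diagonal_add, Function.comp_apply]
    congr! with i
    simp
  commutes' r := by
    simp only [Function.comp_def, algebraMap_apply, smul_eq_mul, mul_one]
    rw [← mul_one (algebraMap _ _ _), ← Unitary.coe_mul_star_self U,
      ← Algebra.left_comm, Unitary.coe_star, mul_assoc]
    congr!
  map_star' f := by
    simp only [star_trivial, StarMul.star_mul, star_star, star_eq_conjTranspose (diagonal _),
      diagonal_conjTranspose, mul_assoc]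
    congr!
    ext
    simp

variable (U : Matrix.unitaryGroup (Fin n) ℂ) (d : Fin n → ℝ)
variable (hAd : A = (U : Matrix (Fin n) (Fin n) ℂ) * Matrix.diagonal (RCLike.ofReal ∘ d) *
      star (U : Matrix (Fin n) (Fin n) ℂ))
include hAd

lemma isClosedEmbedding_auxHom : IsClosedEmbedding (auxHom U d hAd) := by
  have h0 : FiniteDimensional ℝ C(spectrum ℝ A, ℝ) :=
    FiniteDimensional.of_injective (ContinuousMap.coeFnLinearMap ℝ (M := ℝ)) DFunLike.coe_injective
  refine LinearMap.isClosedEmbedding_of_injective (𝕜 := ℝ) (E := C(spectrum ℝ A, ℝ))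
    (F := Matrix (Fin n) (Fin n) ℂ) (f := auxHom U d hAd) <| LinearMap.ker_eq_bot'.mpr
    fun f hf ↦ ?_
  have h2 :
      diagonal (RCLike.ofReal ∘ f ∘ fun i ↦
          (⟨d i, (spec_eq_range U d hAd) ▸ Set.mem_range_self i⟩ : spectrum ℝ A))
        = (0 : Matrix (Fin n) (Fin n) ℂ) := by
    replace hf : auxHom U d hAd f = 0 := hf
    rw [auxHom_apply] at hf
    replace hf := congr($(hf) * (U : Matrix (Fin n) (Fin n) ℂ))
    simp only [mul_assoc, SetLike.coe_mem, Unitary.star_mul_self_of_mem, mul_one, zero_mul] at hf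
    simpa [← mul_assoc] using congr((star U : Matrix (Fin n) (Fin n) ℂ) * $(hf))
  ext x
  simp only [ContinuousMap.zero_apply]
  obtain ⟨x, hx⟩ := x
  obtain ⟨i, rfl⟩ := (spec_eq_range U d hAd) ▸ hx
  rw [← diagonal_zero] at h2
  have := (diagonal_eq_diagonal_iff).mp h2
  refine RCLike.ofReal_eq_zero.mp (this i)

lemma auxHom_id : auxHom U d hAd (.restrict (spectrum ℝ A) (.id ℝ)) = A := by
  conv_rhs => rw [hAd]
  congr!

lemma cfc_conj_diag (f : ℝ → ℝ) :
    cfc f A = (U : Matrix (Fin n) (Fin n) ℂ) *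
      Matrix.diagonal (RCLike.ofReal ∘ f ∘ d) * star (U : Matrix (Fin n) (Fin n) ℂ) := by
  have hA : A.IsHermitian := isHermitian_of_conj U d hAd
  have hA' : IsSelfAdjoint A := hA
  have h := cfcHom_eq_of_continuous_of_map_id hA' (auxHom U d hAd)
    (isClosedEmbedding_auxHom U d hAd).continuous (auxHom_id U d hAd)
  rw [cfc_apply f A hA' (by rw [continuousOn_iff_continuous_restrict]; fun_prop), h]
  simp only [auxHom_apply, ContinuousMap.coe_mk, Function.comp_def, Set.restrict_apply]

lemma hrpow_conj (r : ℝ) :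
    A.hrpow r = (U : Matrix (Fin n) (Fin n) ℂ) *
      Matrix.diagonal (fun i => ((d i ^ r : ℝ) : ℂ)) * star (U : Matrix (Fin n) (Fin n) ℂ) := by
  have hA : A.IsHermitian := isHermitian_of_conj U d hAd
  have h1 : A.hrpow r = cfc (fun x : ℝ => x ^ r) A := by
    rw [Matrix.hrpow, dif_pos hA, hA.cfc_eq]
    rfl
  rw [h1, cfc_conj_diag U d hAd]
  rfl

lemma hrpow_conj' (r : ℝ) :
    A.hrpow r = (U : Matrix (Fin n) (Fin n) ℂ) *
      Matrix.diagonal (RCLike.ofReal ∘ fun i => d i ^ r) *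
      star (U : Matrix (Fin n) (Fin n) ℂ) :=
  hrpow_conj U d hAd r

end HrpowAux

open HrpowAux in
lemma hrpow_key {n : ℕ} (X : Matrix (Fin n) (Fin n) ℂ) (hX : IsUnit X) (lam : ℝ) :
    (X * Xᴴ).hrpow lam = X * ((Xᴴ * X).hrpow (lam - 1)) * Xᴴ := by
  have hB : (Xᴴ * X).PosSemidef := posSemidef_conjTranspose_mul_self X
  have hBh : (Xᴴ * X).IsHermitian := hB.isHermitian
  set μ := hBh.eigenvalues with hμdef
  set V := hBh.eigenvectorUnitary with hVdef
  have hspec : Xᴴ * X = (V : Matrix (Fin n) (Fin n) ℂ) * diagonal (RCLike.ofReal ∘ μ) *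
      star (V : Matrix (Fin n) (Fin n) ℂ) := hBh.spectral_theorem
  have hμpos : ∀ i, 0 < μ i := by
    intro i
    rcases lt_or_eq_of_le (hB.eigenvalues_nonneg i) with h | h
    · exact h
    · exfalso
      have hdet : IsUnit (Xᴴ * X).det := by
        rw [det_mul]
        exact ((isUnit_iff_isUnit_det _).mp ((Matrix.isUnit_conjTranspose X).mpr hX)).mul
          ((isUnit_iff_isUnit_det _).mp hX)
      rw [hBh.det_eq_prod_eigenvalues] at hdet
      refine hdet.ne_zero ?_
      rw [Finset.prod_eq_zero (Finset.mem_univ i)]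
      simp [← h]
  -- the unitary W
  set c : Fin n → ℝ := fun i => (μ i) ^ (-(1/2) : ℝ) with hc
  set Dc : Matrix (Fin n) (Fin n) ℂ := diagonal (fun i => ((c i : ℝ) : ℂ)) with hDc
  have hDcstar : star Dc = Dc := by
    rw [hDc, star_eq_conjTranspose, diagonal_conjTranspose]
    congr! with i
    simp [Pi.star_def]
  set W : Matrix (Fin n) (Fin n) ℂ := X * (V : Matrix (Fin n) (Fin n) ℂ) * Dc with hWdef
  have hVsV : star (V : Matrix (Fin n) (Fin n) ℂ) * (V : Matrix (Fin n) (Fin n) ℂ) = 1 :=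
    Unitary.star_mul_self_of_mem V.2
  have hVVs : (V : Matrix (Fin n) (Fin n) ℂ) * star (V : Matrix (Fin n) (Fin n) ℂ) = 1 :=
    Unitary.mul_star_self_of_mem V.2
  have hdiagmul : ∀ (g : Fin n → ℝ),
      Dc * diagonal (fun i => ((g i : ℝ) : ℂ)) * Dc =
        diagonal (fun i => ((c i * g i * c i : ℝ) : ℂ)) := by
    intro g
    rw [hDc, diagonal_mul_diagonal, diagonal_mul_diagonal]
    congr! with i
    push_cast
    ring
  have hscal : ∀ (t : ℝ) (i : Fin n), c i * μ i ^ t * c i = μ i ^ (t - 1) := by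
    intro t i
    show μ i ^ (-(1/2) : ℝ) * μ i ^ t * μ i ^ (-(1/2) : ℝ) = μ i ^ (t - 1)
    rw [← Real.rpow_add (hμpos i), ← Real.rpow_add (hμpos i)]
    congr 1
    ring
  have hWmem : W ∈ Matrix.unitaryGroup (Fin n) ℂ := by
    rw [Matrix.mem_unitaryGroup_iff']
    have : star W = Dc * star (V : Matrix (Fin n) (Fin n) ℂ) * star X := by
      rw [hWdef]
      simp only [StarMul.star_mul, hDcstar, mul_assoc]
    rw [this, hWdef]
    have expand : Dc * star (V : Matrix (Fin n) (Fin n) ℂ) * star X *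
        (X * (V : Matrix (Fin n) (Fin n) ℂ) * Dc) =
        Dc * (star (V : Matrix (Fin n) (Fin n) ℂ) * (Xᴴ * X) * (V : Matrix (Fin n) (Fin n) ℂ))
          * Dc := by
      rw [star_eq_conjTranspose X]
      simp only [mul_assoc]
    rw [expand, hspec]
    have collapse : star (V : Matrix (Fin n) (Fin n) ℂ) *
        ((V : Matrix (Fin n) (Fin n) ℂ) * diagonal (RCLike.ofReal ∘ μ) *
          star (V : Matrix (Fin n) (Fin n) ℂ)) * (V : Matrix (Fin n) (Fin n) ℂ) =
        diagonal (RCLike.ofReal ∘ μ) := by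
      simp only [mul_assoc, hVsV, mul_one]
      rw [← mul_assoc, hVsV, one_mul]
    rw [collapse]
    have : (diagonal (RCLike.ofReal ∘ μ) : Matrix (Fin n) (Fin n) ℂ) =
        diagonal (fun i => ((μ i ^ (1:ℝ) : ℝ) : ℂ)) := by
      congr! with i
      simp [Real.rpow_one]
    rw [this, hdiagmul]
    have : ∀ i, c i * μ i ^ (1:ℝ) * c i = 1 := by
      intro i
      rw [hscal 1 i]
      simp [Real.rpow_zero]
    simp only [this]
    simp [diagonal_one]
  -- X * Xᴴ = W diag(μ) W*
  have hCconj : X * Xᴴ = W * diagonal (RCLike.ofReal ∘ μ) * star W := by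
    have hstarW : star W = Dc * star (V : Matrix (Fin n) (Fin n) ℂ) * star X := by
      rw [hWdef]; simp only [StarMul.star_mul, hDcstar, mul_assoc]
    symm
    rw [hWdef, hstarW]
    have : (diagonal (RCLike.ofReal ∘ μ) : Matrix (Fin n) (Fin n) ℂ) =
        diagonal (fun i => ((μ i ^ (1:ℝ) : ℝ) : ℂ)) := by
      congr! with i
      simp [Real.rpow_one]
    rw [this]
    have key : Dc * diagonal (fun i => ((μ i ^ (1:ℝ) : ℝ) : ℂ)) * Dc = 1 := by
      rw [hdiagmul]
      have : ∀ i, c i * μ i ^ (1:ℝ) * c i = 1 := by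
        intro i; rw [hscal 1 i]; simp [Real.rpow_zero]
      simp only [this]
      simp [diagonal_one]
    calc X * (V : Matrix (Fin n) (Fin n) ℂ) * Dc * diagonal (fun i => ((μ i ^ (1:ℝ) : ℝ) : ℂ)) *
          (Dc * star (V : Matrix (Fin n) (Fin n) ℂ) * star X)
        = X * ((V : Matrix (Fin n) (Fin n) ℂ) *
            (Dc * diagonal (fun i => ((μ i ^ (1:ℝ) : ℝ) : ℂ)) * Dc) *
            star (V : Matrix (Fin n) (Fin n) ℂ)) * star X := by
          simp only [mul_assoc]
      _ = X * Xᴴ := by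
          rw [key, mul_one, hVVs, mul_one, star_eq_conjTranspose X]
  -- apply hrpow_conj on both sides
  rw [hrpow_conj ⟨W, hWmem⟩ μ hCconj lam, hrpow_conj V μ hspec (lam - 1)]
  show W * diagonal (fun i => ((μ i ^ lam : ℝ) : ℂ)) * star W = _
  have hstarW : star W = Dc * star (V : Matrix (Fin n) (Fin n) ℂ) * star X := by
    rw [hWdef]; simp only [StarMul.star_mul, hDcstar, mul_assoc]
  rw [hWdef, hstarW]
  have key : Dc * diagonal (fun i => ((μ i ^ lam : ℝ) : ℂ)) * Dc =
      diagonal (fun i => ((μ i ^ (lam - 1) : ℝ) : ℂ)) := by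
    have hfun : (fun i => ((c i * μ i ^ lam * c i : ℝ) : ℂ)) =
        fun i => ((μ i ^ (lam - 1) : ℝ) : ℂ) := by
      funext i
      rw [hscal lam i]
    rw [hdiagmul, hfun]
  calc X * (V : Matrix (Fin n) (Fin n) ℂ) * Dc * diagonal (fun i => ((μ i ^ lam : ℝ) : ℂ)) *
        (Dc * star (V : Matrix (Fin n) (Fin n) ℂ) * star X)
      = X * ((V : Matrix (Fin n) (Fin n) ℂ) *
          (Dc * diagonal (fun i => ((μ i ^ lam : ℝ) : ℂ)) * Dc) *
          star (V : Matrix (Fin n) (Fin n) ℂ)) * star X := by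
        simp only [mul_assoc]
    _ = X * ((V : Matrix (Fin n) (Fin n) ℂ) * diagonal (fun i => ((μ i ^ (lam - 1) : ℝ) : ℂ)) *
          star (V : Matrix (Fin n) (Fin n) ℂ)) * Xᴴ := by
        rw [key, star_eq_conjTranspose X]


theorem stmt_12 {n : ℕ} (A D : Matrix (Fin n) (Fin n) ℂ)
    (hA : A.PosDef) (hD : IsUnit D) (lam : ℝ) :
    (D * A * Dᴴ).hrpow lam =
      D * A.hrpow (1/2) *
        ((A.hrpow (1/2) * (Dᴴ * D) * A.hrpow (1/2)).hrpow (lam - 1)) *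
        A.hrpow (1/2) * Dᴴ := by
  have hAh := hA.isHermitian
  have hεpos : ∀ i, 0 < hAh.eigenvalues i := hA.eigenvalues_pos
  have hSconj := HrpowAux.hrpow_conj' hAh.eigenvectorUnitary hAh.eigenvalues
    hAh.spectral_theorem (1/2)
  set S := A.hrpow (1/2) with hSdef
  set U : Matrix (Fin n) (Fin n) ℂ := (hAh.eigenvectorUnitary : Matrix (Fin n) (Fin n) ℂ)
    with hUdef
  set ε := hAh.eigenvalues with hεdef
  have hUsU : star U * U = 1 := Unitary.star_mul_self_of_mem hAh.eigenvectorUnitary.2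
  have hUUs : U * star U = 1 := Unitary.mul_star_self_of_mem hAh.eigenvectorUnitary.2
  have hSherm : S.IsHermitian :=
    HrpowAux.isHermitian_of_conj hAh.eigenvectorUnitary (fun i => ε i ^ ((1:ℝ)/2)) hSconj
  have hdiagmul : ∀ (g g' : Fin n → ℝ),
      (U * diagonal (RCLike.ofReal ∘ g) * star U) * (U * diagonal (RCLike.ofReal ∘ g') * star U)
        = U * diagonal (RCLike.ofReal ∘ fun i => g i * g' i) * star U := by
    intro g g'
    calc (U * diagonal (RCLike.ofReal ∘ g) * star U) *
          (U * diagonal (RCLike.ofReal ∘ g') * star U)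
        = U * (diagonal (RCLike.ofReal ∘ g) * (star U * U) * diagonal (RCLike.ofReal ∘ g'))
            * star U := by simp only [mul_assoc]
      _ = U * (diagonal (RCLike.ofReal ∘ g) * diagonal (RCLike.ofReal ∘ g')) * star U := by
          rw [hUsU, mul_one]
      _ = U * diagonal (RCLike.ofReal ∘ fun i => g i * g' i) * star U := by
          rw [diagonal_mul_diagonal]
          have : (fun i => (RCLike.ofReal ∘ g) i * (RCLike.ofReal ∘ g') i) =
              (RCLike.ofReal ∘ fun i => g i * g' i : Fin n → ℂ) := by
            funext i
            simp [Function.comp]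
          rw [this]
  have hSS : S * S = A := by
    rw [hSconj, hdiagmul]
    have : (RCLike.ofReal ∘ fun i => ε i ^ ((1:ℝ)/2) * ε i ^ ((1:ℝ)/2)) =
        (RCLike.ofReal ∘ ε : Fin n → ℂ) := by
      funext i
      simp only [Function.comp_apply]
      rw [← Real.rpow_add (hεpos i)]
      norm_num
    rw [this]
    exact hAh.spectral_theorem.symm
  have hSunit : IsUnit S := by
    have hmul : S * (U * diagonal (RCLike.ofReal ∘ fun i => ε i ^ (-(1:ℝ)/2)) * star U) = 1 := by
      rw [hSconj, hdiagmul]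
      have : (RCLike.ofReal ∘ fun i => ε i ^ ((1:ℝ)/2) * ε i ^ (-(1:ℝ)/2)) =
          (RCLike.ofReal ∘ fun _ => (1:ℝ) : Fin n → ℂ) := by
        funext i
        simp only [Function.comp_apply]
        rw [← Real.rpow_add (hεpos i)]
        norm_num
      rw [this]
      have : diagonal (RCLike.ofReal ∘ fun _ : Fin n => (1:ℝ)) =
          (1 : Matrix (Fin n) (Fin n) ℂ) := by
        have h1 : (RCLike.ofReal ∘ fun _ : Fin n => (1:ℝ)) = (fun _ => (1:ℂ)) := by
          funext i; simp
        rw [h1]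
        exact diagonal_one
      rw [this, mul_one, hUUs]
    exact ⟨⟨S, _, hmul, mul_eq_one_comm.mp hmul⟩, rfl⟩
  have hXunit : IsUnit (D * S) := hD.mul hSunit
  have h1 : D * A * Dᴴ = (D * S) * (D * S)ᴴ := by
    rw [conjTranspose_mul, hSherm.eq, ← hSS]
    simp only [mul_assoc]
  have h2 : (D * S)ᴴ * (D * S) = S * (Dᴴ * D) * S := by
    rw [conjTranspose_mul, hSherm.eq]
    simp only [mul_assoc]
  rw [h1, hrpow_key (D * S) hXunit lam, h2, conjTranspose_mul, hSherm.eq]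
  simp only [mul_assoc]
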